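/- Let 2 ≤ s < k be integers and let N be a positive integer with N ≤ 2^k − 1. If ∏_{j=1}^{N} (1 − 2^{k−s}/(2^k − j)) · (2^s − 1) · [k choose s]₂ < 1, then G₁(k,s) ≤ N, i.e., there exists a (k,s)-set of cardinality N. -/

import Mathlib

/-- `A ⊆ F₂^r` is a *generic `(r,s)`-erasure correcting set* if for every `r × s` matrix `M`
over `F₂` of rank `s` there is `a ∈ A` such that the row vector `a·M` has Hamming weight `1`. -/
def IsGenericSet (r s : ℕ) (A : Set (Fin r → ZMod 2)) : Prop :=
  ∀ M : Matrix (Fin r) (Fin s) (ZMod 2), M.rank = s →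
    ∃ a ∈ A, hammingNorm (Matrix.vecMul a M) = 1

/-- `F(r,s)`: the minimum cardinality of a generic `(r,s)`-set. -/
noncomputable def Fgen (r s : ℕ) : ℕ :=
  sInf {n | ∃ A : Finset (Fin r → ZMod 2), IsGenericSet r s ↑A ∧ A.card = n}

/-- The standard bilinear form `⟨x,y⟩ = ∑ i, x i * y i` on `F₂^r`. -/
def bform {r : ℕ} (x y : Fin r → ZMod 2) : ZMod 2 := ∑ i, x i * y i

/-- `A ⊆ F₂^r` is an *(r,s)-set* if for every `s` linearly independent vectors `v₁, …, v_s`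
there is `c ∈ A` with `⟨c, v_j⟩ = 1` for all `j`. -/
def IsRSSet (r s : ℕ) (A : Set (Fin r → ZMod 2)) : Prop :=
  ∀ v : Fin s → (Fin r → ZMod 2), LinearIndependent (ZMod 2) v →
    ∃ c ∈ A, ∀ j, bform c (v j) = 1

/-- `G₁(r,s)`: the minimum cardinality of an `(r,s)`-set. -/
noncomputable def G1 (r s : ℕ) : ℕ :=
  sInf {n | ∃ A : Finset (Fin r → ZMod 2), IsRSSet r s ↑A ∧ A.card = n}

/-- `A ⊆ F₂^r` is an *(r,s)-good set* if for every `s` linearly independent vectors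
`v₁, …, v_s` and every `x ∈ F₂^s` there is `c ∈ A` with `⟨c, v_j⟩ = x j` for all `j`. -/
def IsGoodSet (r s : ℕ) (A : Set (Fin r → ZMod 2)) : Prop :=
  ∀ v : Fin s → (Fin r → ZMod 2), LinearIndependent (ZMod 2) v →
    ∀ x : Fin s → ZMod 2, ∃ c ∈ A, ∀ j, bform c (v j) = x j

/-- `G(r,s)`: the minimum cardinality of an `(r,s)`-good set. -/
noncomputable def Ggood (r s : ℕ) : ℕ :=
  sInf {n | ∃ A : Finset (Fin r → ZMod 2), IsGoodSet r s ↑A ∧ A.card = n}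

/-- A linear code `C ⊆ F₂^ι` is *s-wise intersecting* if every `s` linearly independent
codewords have a common coordinate where they are all nonzero. -/
def IsIntersectingCode {ι : Type*} (s : ℕ) (C : Submodule (ZMod 2) (ι → ZMod 2)) : Prop :=
  ∀ u : Fin s → (ι → ZMod 2), (∀ j, u j ∈ C) → LinearIndependent (ZMod 2) u →
    ∃ i, ∀ j, u j i ≠ 0

/-- `n(k,s)`: the minimum length `n` for which an `s`-wise intersecting `[n,k]` code exists. -/
noncomputable def minIntLen (k s : ℕ) : ℕ :=
  sInf {n | ∃ C : Submodule (ZMod 2) (Fin n → ZMod 2),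
    Module.finrank (ZMod 2) C = k ∧ IsIntersectingCode s C}

/-- The Gaussian binomial coefficient `[k choose s]₂` as a real number. -/
noncomputable def gaussBinom (k s : ℕ) : ℝ :=
  ∏ i ∈ Finset.range s, ((2:ℝ)^(k-i) - 1) / ((2:ℝ)^(s-i) - 1)

namespace St9
open Finset
open scoped Classical

abbrev K := ZMod 2
abbrev W (k : ℕ) := Fin k → ZMod 2

/-- `bform` as a linear map in the second argument. -/
def bformR {k : ℕ} (c : W k) : W k →ₗ[K] K where
  toFun y := bform c y
  map_add' y z := by simp [bform, mul_add, Finset.sum_add_distrib]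
  map_smul' t y := by simp [bform, Finset.mul_sum, mul_left_comm, smul_eq_mul]

@[simp] lemma bformR_apply {k : ℕ} (c y : W k) : bformR c y = bform c y := rfl

/-- `bform` as a linear map in the first argument. -/
def bformL {k : ℕ} (w : W k) : W k →ₗ[K] K where
  toFun c := bform c w
  map_add' y z := by simp [bform, add_mul, Finset.sum_add_distrib]
  map_smul' t y := by simp [bform, Finset.mul_sum, mul_assoc, smul_eq_mul]

@[simp] lemma bformL_apply {k : ℕ} (w c : W k) : bformL w c = bform c w := rfl

lemma bform_add_left {k : ℕ} (x y z : W k) :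
    bform (x + y) z = bform x z + bform y z := by
  simp [bform, add_mul, Finset.sum_add_distrib]

@[simp] lemma bform_zero_left {k : ℕ} (z : W k) : bform 0 z = 0 := by simp [bform]


lemma exists_bform_rep {k : ℕ} (G : W k →ₗ[K] K) :
    ∃ c : W k, ∀ y, bform c y = G y := by
  refine ⟨fun i => G (Pi.single i 1), fun y => ?_⟩
  have hy : y = ∑ i, y i • Pi.single i (1 : K) := by
    have : ∀ i, y i • Pi.single i (1:K) = (Pi.single i (y i) : W k) := by
      intro i
      funext t
      by_cases h : t = i <;> simp [Pi.single_apply, h]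
    simp only [this, Finset.univ_sum_single]
  conv_rhs => rw [hy]
  rw [map_sum]
  simp only [map_smul, smul_eq_mul]
  simp [bform, mul_comm]


lemma exists_bform_eq {k s : ℕ} (v : Fin s → W k) (hv : LinearIndependent K v)
    (x : Fin s → K) : ∃ c : W k, ∀ j, bform c (v j) = x j := by
  set V := Submodule.span K (Set.range v) with hV
  let b : Module.Basis (Fin s) K V := Module.Basis.span hv
  let g : V →ₗ[K] K := b.constr ℕ x
  obtain ⟨h, hh⟩ := V.subtype.exists_leftInverse_of_injective V.ker_subtype
  obtain ⟨c, hc⟩ := exists_bform_rep (g.comp h)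
  refine ⟨c, fun j => ?_⟩
  have hmem : v j ∈ V := Submodule.subset_span (Set.mem_range_self j)
  have h1 : (⟨v j, hmem⟩ : V) = b j := by
    apply Subtype.ext
    exact congrArg Subtype.val (Module.Basis.span_apply hv j).symm
  have h2 : h (v j) = b j := by
    have := LinearMap.congr_fun hh (⟨v j, hmem⟩ : V)
    simp only [LinearMap.comp_apply, Submodule.subtype_apply, LinearMap.id_apply] at this
    rw [← h1]; exact this
  rw [hc, LinearMap.comp_apply, h2]
  simp [g, Module.Basis.constr_basis]


lemma bform_span_forall {k s s' : ℕ} {v : Fin s → W k} {v₀ : Fin s' → W k}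
    (hsp : Submodule.span K (Set.range v) = Submodule.span K (Set.range v₀))
    (c c₀ : W k) (hc : ∀ j, bform c (v j) = bform c₀ (v j)) :
    ∀ j, bform c (v₀ j) = bform c₀ (v₀ j) := by
  have key : ∀ {t : ℕ} (u : Fin t → W k),
      (∀ j, bform c (u j) = bform c₀ (u j)) ↔
        Submodule.span K (Set.range u) ≤ LinearMap.ker (bformR c - bformR c₀) := by
    intro t u
    rw [Submodule.span_le, Set.range_subset_iff]
    refine forall_congr' fun j => ?_
    simp [LinearMap.mem_ker, sub_eq_zero]
  exact (key v₀).2 (hsp ▸ (key v).1 hc)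


/-- The event set of a tuple `v`. -/
noncomputable def evt {k s : ℕ} (v : Fin s → W k) : Finset (W k) :=
  (Finset.univ.erase (0 : W k)).filter (fun c => ∀ j, bform c (v j) = 1)

lemma card_evt_ge {k s : ℕ} (hs : 0 < s) (v : Fin s → W k)
    (hv : LinearIndependent K v) : 2 ^ (k - s) ≤ (evt v).card := by
  obtain ⟨c₀, hc₀⟩ := exists_bform_eq v hv 1
  set L : W k →ₗ[K] (Fin s → K) := LinearMap.pi (fun j => bformL (v j)) with hL
  have hker : k - s ≤ Module.finrank K (LinearMap.ker L) := by
    have h1 := LinearMap.finrank_range_add_finrank_ker L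
    have h2 : Module.finrank K (W k) = k := by
      simp [Module.finrank_pi]
    have h3 : Module.finrank K (LinearMap.range L) ≤ s := by
      have := Submodule.finrank_le (LinearMap.range L)
      simpa [Module.finrank_pi] using this
    omega
  have hcard : 2 ^ (k - s) ≤ Fintype.card (LinearMap.ker L) := by
    rw [Module.card_eq_pow_finrank (K := K) (V := LinearMap.ker L), ZMod.card]
    exact Nat.pow_le_pow_right (by norm_num) hker
  have hinj : Fintype.card (LinearMap.ker L) ≤ Fintype.card {x // x ∈ evt v} := by
    refine Fintype.card_le_of_injective
      (fun x => ⟨(x : W k) + c₀, ?_⟩) ?_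
    · have hx : ∀ j, bform (x : W k) (v j) = 0 := by
        intro j
        have := x.2
        rw [LinearMap.mem_ker] at this
        have := congr_fun this j
        simpa [hL, LinearMap.pi_apply] using this
      have hbf : ∀ j, bform ((x : W k) + c₀) (v j) = 1 := by
        intro j; rw [bform_add_left, hx j, hc₀ j]; simp
      simp only [evt, Finset.mem_filter, Finset.mem_erase, Finset.mem_univ, and_true]
      refine ⟨?_, hbf⟩
      intro h0
      have := hbf ⟨0, hs⟩
      rw [h0, bform_zero_left] at this
      exact absurd this (by decide)
    · intro a b hab
      have := congrArg Subtype.val hab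
      simp only [add_left_inj] at this
      exact Subtype.ext this
  calc 2 ^ (k-s) ≤ Fintype.card (LinearMap.ker L) := hcard
    _ ≤ Fintype.card {x // x ∈ evt v} := hinj
    _ = (evt v).card := Fintype.card_coe _


noncomputable def TT (k s : ℕ) : Finset (Fin s → W k) :=
  Finset.univ.filter (fun v => LinearIndependent K v)

lemma card_TT {k s : ℕ} (hsk : s ≤ k) :
    (TT k s).card = ∏ i ∈ range s, (2 ^ k - 2 ^ i) := by
  have h1 : (TT k s).card = Fintype.card {v : Fin s → W k // LinearIndependent K v} := by
    rw [Fintype.card_subtype]; rfl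
  have hn : Module.finrank K (W k) = k := by simp [Module.finrank_pi]
  have := card_linearIndependent (K := K) (V := W k) (k := s) (by rw [hn]; exact hsk)
  rw [Nat.card_eq_fintype_card] at this
  rw [h1, this, ZMod.card, hn]
  exact Fin.prod_univ_eq_prod_range (fun i => 2 ^ k - 2 ^ i) s

lemma card_fiber {k s : ℕ} (V : Submodule K (W k)) (hV : Module.finrank K V = s) :
    (Finset.univ.filter (fun v : Fin s → W k =>
        LinearIndependent K v ∧ Submodule.span K (Set.range v) = V)).card
      = ∏ i ∈ range s, (2 ^ s - 2 ^ i) := by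
  have hmem : ∀ (p : {v : Fin s → W k // LinearIndependent K v ∧
      Submodule.span K (Set.range v) = V}) (j : Fin s), p.1 j ∈ V := by
    intro p j
    have hm := Submodule.subset_span (R := K) (Set.mem_range_self (f := p.1) j)
    rw [p.2.2] at hm
    exact hm
  have e : {v : Fin s → W k // LinearIndependent K v ∧ Submodule.span K (Set.range v) = V}
      ≃ {u : Fin s → V // LinearIndependent K u} :=
    { toFun := fun p => ⟨fun j => ⟨p.1 j, hmem p j⟩,
        LinearIndependent.of_comp V.subtype p.2.1⟩
      invFun := fun q => ⟨fun j => (q.1 j : W k), q.2.map' V.subtype V.ker_subtype, by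
        have hspan : Submodule.span K (Set.range q.1) = ⊤ :=
          q.2.span_eq_top_of_card_eq_finrank' (by simp [hV])
        have hr : (Set.range (fun j => (q.1 j : W k))) = V.subtype '' Set.range q.1 := by
          rw [← Set.range_comp]; rfl
        rw [hr, ← Submodule.map_span, hspan, Submodule.map_top, Submodule.range_subtype]⟩
      left_inv := fun p => Subtype.ext (funext fun j => rfl)
      right_inv := fun q => Subtype.ext (funext fun j => Subtype.ext rfl) }
  have h1 : (Finset.univ.filter (fun v : Fin s → W k =>
      LinearIndependent K v ∧ Submodule.span K (Set.range v) = V)).card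
      = Fintype.card {v : Fin s → W k //
          LinearIndependent K v ∧ Submodule.span K (Set.range v) = V} := by
    rw [Fintype.card_subtype]
  rw [h1, Fintype.card_congr e]
  have := card_linearIndependent (K := K) (V := V) (k := s) (by rw [hV])
  rw [Nat.card_eq_fintype_card] at this
  rw [this, ZMod.card, hV]
  exact Fin.prod_univ_eq_prod_range (fun i => 2 ^ s - 2 ^ i) s

noncomputable def spanImg (k s : ℕ) : Finset (Submodule K (W k)) :=
  (TT k s).image (fun v => Submodule.span K (Set.range v))

lemma card_spanImg_mul {k s : ℕ} (hsk : s ≤ k) :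
    (spanImg k s).card * ∏ i ∈ range s, (2 ^ s - 2 ^ i)
      = ∏ i ∈ range s, (2 ^ k - 2 ^ i) := by
  have hgroup : (TT k s).card = ∑ V ∈ spanImg k s,
      ((TT k s).filter (fun v => Submodule.span K (Set.range v) = V)).card :=
    Finset.card_eq_sum_card_fiberwise (fun v hv => Finset.mem_image_of_mem _ hv)
  have hfib : ∀ V ∈ spanImg k s,
      ((TT k s).filter (fun v => Submodule.span K (Set.range v) = V)).card
        = ∏ i ∈ range s, (2 ^ s - 2 ^ i) := by
    intro V hV
    obtain ⟨v₀, hv₀T, hv₀⟩ := Finset.mem_image.1 hV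
    have hv₀li : LinearIndependent K v₀ := (Finset.mem_filter.1 hv₀T).2
    have hVrk : Module.finrank K V = s := by
      rw [← hv₀, finrank_span_eq_card hv₀li]
      simp
    rw [← card_fiber V hVrk]
    congr 1
    rw [TT, Finset.filter_filter]
  rw [Finset.sum_congr rfl hfib, Finset.sum_const, smul_eq_mul] at hgroup
  rw [← hgroup, card_TT hsk]


lemma card_evt_fiber {k s : ℕ} (hs : 0 < s) (V : Submodule K (W k)) (hV : V ∈ spanImg k s) :
    (((TT k s).filter (fun v => Submodule.span K (Set.range v) = V)).image evt).card
      ≤ 2 ^ s - 1 := by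
  obtain ⟨v₀, hv₀T, hv₀⟩ := Finset.mem_image.1 hV
  set θ : Finset (W k) → (Fin s → K) := fun E =>
    if hE : E.Nonempty then (fun j => bform hE.choose (v₀ j)) else 0 with hθ
  set Φ := ((TT k s).filter (fun v => Submodule.span K (Set.range v) = V)).image evt with hΦ
  -- for each E ∈ Φ, a characterization
  have hchar : ∀ E ∈ Φ, (θ E ≠ 0) ∧
      E = (Finset.univ.erase (0 : W k)).filter (fun c => ∀ j, bform c (v₀ j) = θ E j) := by
    intro E hE
    obtain ⟨v, hvF, hvE⟩ := Finset.mem_image.1 hE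
    have hvT : v ∈ TT k s := (Finset.mem_filter.1 hvF).1
    have hvsp : Submodule.span K (Set.range v) = Submodule.span K (Set.range v₀) := by
      rw [(Finset.mem_filter.1 hvF).2, ← hv₀]
    have hvli : LinearIndependent K v := (Finset.mem_filter.1 hvT).2
    have hEne : E.Nonempty := by
      rw [← hvE]
      have := card_evt_ge hs v hvli
      have : 0 < (evt v).card := lt_of_lt_of_le (Nat.pow_pos (by norm_num)) this
      exact Finset.card_pos.1 this
    have hcE := hEne.choose_spec
    set cE := hEne.choose with hcEdef
    have hθE : θ E = fun j => bform cE (v₀ j) := by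
      rw [hθ]; simp only [dif_pos hEne]; rfl
    have hcEprop : ∀ j, bform cE (v j) = 1 := by
      have := hcE
      rw [← hvE] at this
      exact (Finset.mem_filter.1 this).2
    constructor
    · intro h0
      rw [hθE] at h0
      have hz : ∀ j, bform cE (v₀ j) = bform 0 (v₀ j) := by
        intro j
        rw [bform_zero_left]
        exact congrFun h0 j
      have := bform_span_forall hvsp.symm cE 0 hz ⟨0, hs⟩
      rw [bform_zero_left, hcEprop ⟨0, hs⟩] at this
      exact absurd this (by decide)
    · conv_lhs => rw [← hvE]
      rw [hθE]
      ext c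
      simp only [evt, Finset.mem_filter, and_congr_right_iff]
      intro _
      constructor
      · intro hc
        exact bform_span_forall hvsp c cE (fun j => by rw [hc j, hcEprop j])
      · intro hc
        intro j
        have := bform_span_forall hvsp.symm c cE hc j
        rw [this, hcEprop j]
  -- θ is injective on Φ and misses 0
  have hinj : Set.InjOn θ Φ := by
    intro E hE E' hE' hEE'
    rw [(hchar E hE).2, (hchar E' hE').2, hEE']
  have h1 : Φ.card = (Φ.image θ).card := (Finset.card_image_of_injOn hinj).symm
  have h2 : Φ.image θ ⊆ Finset.univ.erase 0 := by
    intro g hg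
    obtain ⟨E, hE, hgE⟩ := Finset.mem_image.1 hg
    exact Finset.mem_erase.2 ⟨hgE ▸ (hchar E hE).1, Finset.mem_univ _⟩
  have h3 : (Finset.univ.erase (0 : Fin s → K)).card = 2 ^ s - 1 := by
    rw [Finset.card_erase_of_mem (Finset.mem_univ _)]
    congr 1
    simp [Fintype.card_fun, ZMod.card]
  rw [h1, ← h3]
  exact Finset.card_le_card h2


lemma card_evts {k s : ℕ} (hs : 0 < s) (hsk : s ≤ k) :
    ((TT k s).image evt).card * ∏ i ∈ range s, (2 ^ s - 2 ^ i)
      ≤ (2 ^ s - 1) * ∏ i ∈ range s, (2 ^ k - 2 ^ i) := by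
  have hsub : (TT k s).image evt ⊆ (spanImg k s).biUnion
      (fun V => ((TT k s).filter (fun v => Submodule.span K (Set.range v) = V)).image evt) := by
    intro E hE
    obtain ⟨v, hvT, hvE⟩ := Finset.mem_image.1 hE
    refine Finset.mem_biUnion.2 ⟨Submodule.span K (Set.range v),
      Finset.mem_image_of_mem _ hvT, ?_⟩
    exact Finset.mem_image.2 ⟨v, Finset.mem_filter.2 ⟨hvT, rfl⟩, hvE⟩
  have h1 : ((TT k s).image evt).card ≤ (spanImg k s).card * (2 ^ s - 1) := by
    calc ((TT k s).image evt).card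
        ≤ ((spanImg k s).biUnion _).card := Finset.card_le_card hsub
      _ ≤ ∑ V ∈ spanImg k s,
            (((TT k s).filter (fun v => Submodule.span K (Set.range v) = V)).image evt).card :=
          Finset.card_biUnion_le
      _ ≤ ∑ _V ∈ spanImg k s, (2 ^ s - 1) :=
          Finset.sum_le_sum (fun V hV => card_evt_fiber hs V hV)
      _ = (spanImg k s).card * (2 ^ s - 1) := by rw [Finset.sum_const, smul_eq_mul]
  calc ((TT k s).image evt).card * ∏ i ∈ range s, (2 ^ s - 2 ^ i)
      ≤ ((spanImg k s).card * (2 ^ s - 1)) * ∏ i ∈ range s, (2 ^ s - 2 ^ i) :=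
        Nat.mul_le_mul_right _ h1
    _ = (2 ^ s - 1) * ((spanImg k s).card * ∏ i ∈ range s, (2 ^ s - 2 ^ i)) := by ring
    _ = (2 ^ s - 1) * ∏ i ∈ range s, (2 ^ k - 2 ^ i) := by rw [card_spanImg_mul hsk]


lemma pow_sub_fact {n i : ℕ} (h : i ≤ n) :
    (2:ℝ) ^ n - 2 ^ i = 2 ^ i * ((2:ℝ) ^ (n - i) - 1) := by
  rw [mul_sub, mul_one, ← pow_add, Nat.add_sub_cancel' h]


lemma gauss_eq {k s : ℕ} (hsk : s ≤ k) :
    gaussBinom k s * ∏ i ∈ range s, ((2 ^ s - 2 ^ i : ℕ) : ℝ)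
      = ∏ i ∈ range s, ((2 ^ k - 2 ^ i : ℕ) : ℝ) := by
  rw [gaussBinom, ← Finset.prod_mul_distrib]
  refine Finset.prod_congr rfl fun i hi => ?_
  have his : i < s := Finset.mem_range.1 hi
  have hik : i ≤ k := le_trans (le_of_lt his) hsk
  have hcs : ((2 ^ s - 2 ^ i : ℕ) : ℝ) = (2:ℝ) ^ s - 2 ^ i := by
    rw [Nat.cast_sub (Nat.pow_le_pow_right (by norm_num) his.le)]
    push_cast
    ring
  have hck : ((2 ^ k - 2 ^ i : ℕ) : ℝ) = (2:ℝ) ^ k - 2 ^ i := by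
    rw [Nat.cast_sub (Nat.pow_le_pow_right (by norm_num) hik)]
    push_cast
    ring
  rw [hcs, hck, pow_sub_fact his.le, pow_sub_fact hik]
  have hne : (2:ℝ) ^ (s - i) - 1 ≠ 0 := by
    have : (2:ℝ) ^ (s - i) ≥ 2 ^ 1 := by
      apply pow_le_pow_right₀ (by norm_num)
      omega
    simp only [pow_one] at this
    intro hc
    nlinarith
  field_simp


lemma prod_desc {k s : ℕ} (hs : 0 < s) (hsk : s < k) :
    ∀ N : ℕ, N ≤ 2 ^ k - 1 - 2 ^ (k - s) →
    (∏ j ∈ Icc 1 N, (1 - (2:ℝ) ^ (k - s) / ((2:ℝ) ^ k - (j:ℝ)))) *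
        (Nat.descFactorial (2 ^ k - 1) N : ℝ)
      = (Nat.descFactorial (2 ^ k - 1 - 2 ^ (k - s)) N : ℝ) := by
  have h1 : (1:ℕ) ≤ 2 ^ k := Nat.one_le_two_pow
  have hmlt : 2 ^ (k - s) < 2 ^ k := Nat.pow_lt_pow_right (by norm_num) (by omega)
  have hm1 : (1:ℕ) ≤ 2 ^ (k - s) := Nat.one_le_two_pow
  intro N
  induction N with
  | zero => intro _; simp
  | succ N ih =>
    intro hN
    have hN' : N ≤ 2 ^ k - 1 - 2 ^ (k - s) := by omega
    rw [Finset.prod_Icc_succ_top (Nat.succ_le_succ (Nat.zero_le N)),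
      Nat.descFactorial_succ, Nat.descFactorial_succ]
    push_cast
    have hx : (2:ℝ) ^ k - (N + 1 : ℝ) = ((2 ^ k - 1 - N : ℕ) : ℝ) := by
      have : ((2 ^ k - 1 - N : ℕ) : ℝ) = ((2 ^ k : ℕ) : ℝ) - 1 - N := by
        push_cast [Nat.cast_sub (show N ≤ 2 ^ k - 1 by omega), Nat.cast_sub h1]
        ring
      rw [this]
      push_cast
      ring
    have hxpos : (0:ℝ) < ((2 ^ k - 1 - N : ℕ) : ℝ) := by
      have : 0 < 2 ^ k - 1 - N := by omega
      exact_mod_cast this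
    have hstep : (1 - (2:ℝ) ^ (k - s) / ((2:ℝ) ^ k - (N + 1 : ℝ)))
        * ((2 ^ k - 1 - N : ℕ) : ℝ)
        = ((2 ^ k - 1 - 2 ^ (k - s) - N : ℕ) : ℝ) := by
      rw [hx, sub_mul, one_mul, div_mul_cancel₀ _ (ne_of_gt hxpos)]
      have hc1 : ((2 ^ k - 1 - 2 ^ (k - s) - N : ℕ) : ℝ)
          = ((2 ^ k - 1 - N : ℕ) : ℝ) - ((2 ^ (k - s) : ℕ) : ℝ) := by
        rw [← Nat.cast_sub (show 2 ^ (k-s) ≤ 2 ^ k - 1 - N by omega)]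
        congr 1
        omega
      rw [hc1]
      push_cast
      ring
    calc (∏ j ∈ Icc 1 N, (1 - (2:ℝ) ^ (k - s) / ((2:ℝ) ^ k - (j:ℝ)))) *
          (1 - (2:ℝ) ^ (k - s) / ((2:ℝ) ^ k - ((N:ℝ) + 1))) *
          (((2 ^ k - 1 - N : ℕ) : ℝ) * (Nat.descFactorial (2 ^ k - 1) N : ℝ))
        = ((∏ j ∈ Icc 1 N, (1 - (2:ℝ) ^ (k - s) / ((2:ℝ) ^ k - (j:ℝ)))) *
            (Nat.descFactorial (2 ^ k - 1) N : ℝ)) *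
          ((1 - (2:ℝ) ^ (k - s) / ((2:ℝ) ^ k - ((N:ℝ) + 1))) *
            ((2 ^ k - 1 - N : ℕ) : ℝ)) := by ring
      _ = (Nat.descFactorial (2 ^ k - 1 - 2 ^ (k - s)) N : ℝ) *
          ((2 ^ k - 1 - 2 ^ (k - s) - N : ℕ) : ℝ) := by rw [ih hN', hstep]
      _ = ((2 ^ k - 1 - 2 ^ (k - s) - N : ℕ) : ℝ) *
          (Nat.descFactorial (2 ^ k - 1 - 2 ^ (k - s)) N : ℝ) := by ring

end St9

open St9 Finset in
/-- Probabilistic upper bound for `G₁(k,s)`: if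
`∏_{j=1}^{N} (1 - 2^(k-s)/(2^k - j)) · (2^s - 1) · [k choose s]₂ < 1`
then there is a `(k,s)`-set of size `N`, so `G₁(k,s) ≤ N`. -/
theorem statement9 (k s N : ℕ) (hs : 2 ≤ s) (hsk : s < k) (hN : 1 ≤ N) (hN' : N ≤ 2 ^ k - 1)
    (h : (∏ j ∈ Finset.Icc 1 N, (1 - (2:ℝ) ^ (k - s) / ((2:ℝ) ^ k - (j:ℝ)))) *
      ((2:ℝ) ^ s - 1) * gaussBinom k s < 1) :
    G1 k s ≤ N ∧ ∃ A : Finset (Fin k → ZMod 2), IsRSSet k s ↑A ∧ A.card = N := by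
  classical
  have hs0 : 0 < s := by omega
  have hsk' : s ≤ k := hsk.le
  have h2k : (1:ℕ) ≤ 2 ^ k := Nat.one_le_two_pow
  have hmlt : 2 ^ (k - s) < 2 ^ k := Nat.pow_lt_pow_right (by norm_num) (by omega)
  have hm1 : (1:ℕ) ≤ 2 ^ (k - s) := Nat.one_le_two_pow
  have hΩcard : ((Finset.univ.erase (0 : W k))).card = 2 ^ k - 1 := by
    rw [Finset.card_erase_of_mem (Finset.mem_univ _), Finset.card_univ]
    congr 1
    simp [ZMod.card]
  have hCMpos : 0 < Nat.choose (2 ^ k - 1) N := Nat.choose_pos hN'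
  -- the key counting inequality
  have hnum : ((TT k s).image evt).card * Nat.choose (2 ^ k - 1 - 2 ^ (k - s)) N
      < Nat.choose (2 ^ k - 1) N := by
    by_cases hcase : 2 ^ k - 1 - 2 ^ (k - s) < N
    · rw [Nat.choose_eq_zero_of_lt hcase, mul_zero]
      exact hCMpos
    · push_neg at hcase
      have hPd := prod_desc hs0 hsk N hcase
      rw [Nat.descFactorial_eq_factorial_mul_choose, Nat.descFactorial_eq_factorial_mul_choose]
        at hPd
      have hfacne : ((N.factorial : ℝ)) ≠ 0 :=
        Nat.cast_ne_zero.2 (Nat.factorial_ne_zero N)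
      have hP : (Nat.choose (2 ^ k - 1 - 2 ^ (k - s)) N : ℝ)
          = (∏ j ∈ Icc 1 N, (1 - (2:ℝ) ^ (k - s) / ((2:ℝ) ^ k - (j:ℝ)))) *
            (Nat.choose (2 ^ k - 1) N : ℝ) := by
        apply mul_left_cancel₀ hfacne
        push_cast at hPd ⊢
        nlinarith [hPd]
      have hBpos : (0:ℝ) < ∏ i ∈ range s, ((2 ^ s - 2 ^ i : ℕ) : ℝ) := by
        apply Finset.prod_pos
        intro i hi
        have : 0 < 2 ^ s - 2 ^ i := by
          have : 2 ^ i < 2 ^ s := Nat.pow_lt_pow_right (by norm_num) (Finset.mem_range.1 hi)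
          omega
        exact_mod_cast this
      have h2s : ((2 ^ s - 1 : ℕ) : ℝ) = (2:ℝ) ^ s - 1 := by
        rw [Nat.cast_sub Nat.one_le_two_pow]
        push_cast; ring
      have hScard : (((TT k s).image evt).card : ℝ) ≤ ((2:ℝ) ^ s - 1) * gaussBinom k s := by
        rw [← mul_le_mul_iff_of_pos_right hBpos]
        have hc := card_evts (k := k) hs0 hsk'
        have hc' : ((((TT k s).image evt).card : ℝ)) * (∏ i ∈ range s, ((2 ^ s - 2 ^ i : ℕ) : ℝ))
            ≤ ((2 ^ s - 1 : ℕ) : ℝ) * ∏ i ∈ range s, ((2 ^ k - 2 ^ i : ℕ) : ℝ) := by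
          exact_mod_cast hc
        calc ((((TT k s).image evt).card : ℝ)) * (∏ i ∈ range s, ((2 ^ s - 2 ^ i : ℕ) : ℝ))
            ≤ ((2 ^ s - 1 : ℕ) : ℝ) * ∏ i ∈ range s, ((2 ^ k - 2 ^ i : ℕ) : ℝ) := hc'
          _ = ((2:ℝ) ^ s - 1) *
              (gaussBinom k s * ∏ i ∈ range s, ((2 ^ s - 2 ^ i : ℕ) : ℝ)) := by
              rw [gauss_eq hsk', h2s]
          _ = ((2:ℝ) ^ s - 1) * gaussBinom k s *
              ∏ i ∈ range s, ((2 ^ s - 2 ^ i : ℕ) : ℝ) := by ring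
      have hfin : ((((TT k s).image evt).card : ℝ)) *
          (Nat.choose (2 ^ k - 1 - 2 ^ (k - s)) N : ℝ) < (Nat.choose (2 ^ k - 1) N : ℝ) := by
        have hCMpos' : (0:ℝ) < (Nat.choose (2 ^ k - 1) N : ℝ) := by exact_mod_cast hCMpos
        have hPCnonneg : (0:ℝ) ≤ (Nat.choose (2 ^ k - 1 - 2 ^ (k - s)) N : ℝ) :=
          Nat.cast_nonneg _
        calc ((((TT k s).image evt).card : ℝ)) *
              (Nat.choose (2 ^ k - 1 - 2 ^ (k - s)) N : ℝ)
            ≤ (((2:ℝ) ^ s - 1) * gaussBinom k s) *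
              (Nat.choose (2 ^ k - 1 - 2 ^ (k - s)) N : ℝ) :=
              mul_le_mul_of_nonneg_right hScard hPCnonneg
          _ = ((∏ j ∈ Icc 1 N, (1 - (2:ℝ) ^ (k - s) / ((2:ℝ) ^ k - (j:ℝ)))) *
                ((2:ℝ) ^ s - 1) * gaussBinom k s) * (Nat.choose (2 ^ k - 1) N : ℝ) := by
              rw [hP]; ring
          _ < 1 * (Nat.choose (2 ^ k - 1) N : ℝ) := mul_lt_mul_of_pos_right h hCMpos'
          _ = (Nat.choose (2 ^ k - 1) N : ℝ) := one_mul _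
      exact_mod_cast hfin
  -- existence of a good A
  have hgood : ∃ A ∈ (Finset.univ.erase (0 : W k)).powersetCard N,
      ∀ E ∈ (TT k s).image evt, (A ∩ E).Nonempty := by
    by_contra hA
    push_neg at hA
    have hsub : (Finset.univ.erase (0 : W k)).powersetCard N ⊆
        ((TT k s).image evt).biUnion
          (fun E => ((Finset.univ.erase (0 : W k)) \ E).powersetCard N) := by
      intro A hAp
      obtain ⟨E, hE, hint⟩ := hA A hAp
      refine Finset.mem_biUnion.2 ⟨E, hE, Finset.mem_powersetCard.2
        ⟨?_, (Finset.mem_powersetCard.1 hAp).2⟩⟩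
      intro a ha
      refine Finset.mem_sdiff.2 ⟨(Finset.mem_powersetCard.1 hAp).1 ha, fun haE => ?_⟩
      have : a ∈ A ∩ E := Finset.mem_inter.2 ⟨ha, haE⟩
      rw [hint] at this
      exact absurd this (Finset.notMem_empty a)
    have hle : Nat.choose (2 ^ k - 1) N ≤
        ((TT k s).image evt).card * Nat.choose (2 ^ k - 1 - 2 ^ (k - s)) N := by
      calc Nat.choose (2 ^ k - 1) N
          = ((Finset.univ.erase (0 : W k)).powersetCard N).card := by
            rw [Finset.card_powersetCard, hΩcard]
        _ ≤ (((TT k s).image evt).biUnion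
              (fun E => ((Finset.univ.erase (0 : W k)) \ E).powersetCard N)).card :=
            Finset.card_le_card hsub
        _ ≤ ∑ E ∈ (TT k s).image evt,
              (((Finset.univ.erase (0 : W k)) \ E).powersetCard N).card :=
            Finset.card_biUnion_le
        _ ≤ ∑ _E ∈ (TT k s).image evt, Nat.choose (2 ^ k - 1 - 2 ^ (k - s)) N := by
            apply Finset.sum_le_sum
            intro E hE
            obtain ⟨v, hvT, hvE⟩ := Finset.mem_image.1 hE
            have hvli : LinearIndependent K v := (Finset.mem_filter.1 hvT).2
            have hEcard : 2 ^ (k - s) ≤ E.card := hvE ▸ card_evt_ge hs0 v hvli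
            have hEsub : E ⊆ Finset.univ.erase (0 : W k) := by
              rw [← hvE]; exact Finset.filter_subset _ _
            rw [Finset.card_powersetCard, Finset.card_sdiff_of_subset hEsub, hΩcard]
            exact Nat.choose_le_choose N (by omega)
        _ = ((TT k s).image evt).card * Nat.choose (2 ^ k - 1 - 2 ^ (k - s)) N := by
            rw [Finset.sum_const, smul_eq_mul]
    exact absurd hnum (not_lt.2 hle)
  obtain ⟨A, hAp, hAgood⟩ := hgood
  have hAcard : A.card = N := (Finset.mem_powersetCard.1 hAp).2
  have hRS : IsRSSet k s ↑A := by
    intro v hv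
    have hvT : v ∈ TT k s := Finset.mem_filter.2 ⟨Finset.mem_univ _, hv⟩
    obtain ⟨c, hc⟩ := hAgood (evt v) (Finset.mem_image_of_mem _ hvT)
    rw [Finset.mem_inter] at hc
    exact ⟨c, Finset.mem_coe.2 hc.1, (Finset.mem_filter.1 hc.2).2⟩
  exact ⟨Nat.sInf_le ⟨A, hRS, hAcard⟩, A, hRS, hAcard⟩
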